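/- For every w ∈ ℂ with |w| < R one has e_q(w) ≠ 0. Consequently, for all z, z' ∈ ℂ with |z|² < R and |z'|² < R, the overlap of the two q-coherent states is nonzero: ⟨c_{z'}, c_z⟩ ≠ 0; in particular no two q-coherent states are orthogonal. -/

import Mathlib

open scoped BigOperators

/-- The q-number `[n]_q = (1 - q^n)/(1 - q)`. -/
noncomputable def qnum (q : ℝ) (n : ℕ) : ℝ := (1 - q ^ n) / (1 - q)

/-- The q-factorial `[n]_q! = [1]_q [2]_q ⋯ [n]_q`, with `[0]_q! = 1`. -/
noncomputable def qfact (q : ℝ) : ℕ → ℝ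
  | 0 => 1
  | n + 1 => qfact q n * qnum q (n + 1)

/-- The complex q-exponential `e_q(w) = ∑ w^n/[n]_q!`. -/
noncomputable def qexC (q : ℝ) (w : ℂ) : ℂ := ∑' n : ℕ, w ^ n / (qfact q n : ℂ)

/-- The real q-exponential `e_q(x) = ∑ x^n/[n]_q!`. -/
noncomputable def qexR (q : ℝ) (x : ℝ) : ℝ := ∑' n : ℕ, x ^ n / qfact q n

/-- The normalized q-coherent state `c_z(n) = e_q(|z|²)^{-1/2} z^n / √([n]_q!)`. -/
noncomputable def coh (q : ℝ) (z : ℂ) (n : ℕ) : ℂ :=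
  (((Real.sqrt (qexR q (‖z‖ ^ 2)))⁻¹ : ℝ) : ℂ) * z ^ n / ((Real.sqrt (qfact q n) : ℝ) : ℂ)

section Aux

variable {q : ℝ} (hq0 : 0 < q) (hq1 : q < 1)
include hq0 hq1

lemma qnum_pos (n : ℕ) : 0 < qnum q (n + 1) := by
  have h1 : q ^ (n + 1) < 1 := pow_lt_one₀ hq0.le hq1 (Nat.succ_ne_zero n)
  have : 0 < 1 - q := by linarith
  exact div_pos (by linarith) this

lemma qnum_ge_one (n : ℕ) : 1 ≤ qnum q (n + 1) := by
  have h1 : q ^ (n + 1) ≤ q := pow_le_of_le_one hq0.le hq1.le (Nat.succ_ne_zero n)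
  have h2 : 0 < 1 - q := by linarith
  rw [qnum, le_div_iff₀ h2]
  linarith

lemma qnum_mono {m n : ℕ} (h : m ≤ n) : qnum q m ≤ qnum q n := by
  have h1 : q ^ n ≤ q ^ m := pow_le_pow_of_le_one hq0.le hq1.le h
  have h2 : 0 < 1 - q := by linarith
  rw [qnum, qnum]
  gcongr

lemma qfact_pos (n : ℕ) : 0 < qfact q n := by
  induction n with
  | zero => norm_num [qfact]
  | succ n ih => exact mul_pos ih (qnum_pos hq0 hq1 n)

lemma qfact_ge_one (n : ℕ) : 1 ≤ qfact q n := by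
  induction n with
  | zero => norm_num [qfact]
  | succ n ih =>
      have := qnum_ge_one hq0 hq1 n
      calc (1:ℝ) = 1 * 1 := by ring
      _ ≤ qfact q n * qnum q (n + 1) := mul_le_mul ih this (by norm_num) (by linarith)

lemma summable_qexC (w : ℂ) (hw : ‖w‖ < 1 / (1 - q)) :
    Summable (fun n : ℕ => w ^ n / (qfact q n : ℂ)) := by
  have hq2 : 0 < 1 - q := by linarith
  have hwq : ‖w‖ * (1 - q) < 1 := by
    have := (lt_div_iff₀ hq2).mp hw
    linarith
  have hε : 0 < 1 - ‖w‖ * (1 - q) := by linarith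
  obtain ⟨m, hm⟩ := exists_pow_lt_of_lt_one hε hq1
  have hqm1 : q ^ m < 1 := by
    have : ‖w‖ * (1 - q) ≥ 0 := mul_nonneg (norm_nonneg _) hq2.le
    linarith
  have hmpos : 0 < qnum q m := div_pos (by linarith) hq2
  have hwm : ‖w‖ < qnum q m := by
    rw [qnum, lt_div_iff₀ hq2]; linarith
  have hr : ‖w‖ / qnum q m < 1 := (div_lt_one hmpos).mpr hwm
  apply summable_of_ratio_norm_eventually_le hr
  filter_upwards [Filter.eventually_atTop.mpr ⟨m, fun n hn => hn⟩] with n hn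
  have hfn : 0 < qfact q n := qfact_pos hq0 hq1 n
  have hfn1 : 0 < qfact q (n + 1) := qfact_pos hq0 hq1 (n + 1)
  have hnum : 0 < qnum q (n + 1) := qnum_pos hq0 hq1 n
  rw [norm_div, norm_div, norm_pow, norm_pow, Complex.norm_real, Complex.norm_real,
    Real.norm_eq_abs, Real.norm_eq_abs, abs_of_pos hfn, abs_of_pos hfn1]
  have key : qnum q m * qfact q n ≤ qfact q (n + 1) := by
    have h1 : qnum q m ≤ qnum q (n + 1) := qnum_mono hq0 hq1 (by omega)
    calc qnum q m * qfact q n ≤ qnum q (n + 1) * qfact q n :=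
          mul_le_mul_of_nonneg_right h1 hfn.le
    _ = qfact q (n + 1) := by rw [show qfact q (n + 1) = qfact q n * qnum q (n + 1) from rfl]; ring
  calc ‖w‖ ^ (n + 1) / qfact q (n + 1) ≤ ‖w‖ ^ (n + 1) / (qnum q m * qfact q n) :=
        div_le_div_of_nonneg_left (pow_nonneg (norm_nonneg _) _)
          (mul_pos hmpos hfn) key
  _ = ‖w‖ / qnum q m * (‖w‖ ^ n / qfact q n) := by
      rw [div_mul_div_comm, ← pow_succ']

set_option maxHeartbeats 800000 in
lemma qexC_funeq (w : ℂ) (hw : ‖w‖ < 1 / (1 - q)) :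
    qexC q ((q : ℂ) * w) = (1 - (1 - q : ℝ) * w) * qexC q w := by
  have hq2 : 0 < 1 - q := by linarith
  have hf : Summable (fun n : ℕ => w ^ n / (qfact q n : ℂ)) := summable_qexC hq0 hq1 w hw
  have hwq : ‖(q : ℂ) * w‖ < 1 / (1 - q) := by
    rw [norm_mul, Complex.norm_real, Real.norm_eq_abs, abs_of_pos hq0]
    calc q * ‖w‖ ≤ 1 * ‖w‖ := mul_le_mul_of_nonneg_right hq1.le (norm_nonneg _)
    _ = ‖w‖ := one_mul _
    _ < 1 / (1 - q) := hw
  have hg : Summable (fun n : ℕ => ((q : ℂ) * w) ^ n / (qfact q n : ℂ)) :=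
    summable_qexC hq0 hq1 _ hwq
  have hfs : Summable (fun n : ℕ => w ^ (n + 1) / (qfact q (n + 1) : ℂ)) :=
    (summable_nat_add_iff 1).mpr hf
  have hfm : Summable (fun n : ℕ => ((1 - q : ℝ) : ℂ) * w * (w ^ n / (qfact q n : ℂ))) :=
    hf.mul_left _
  have hterm : ∀ n : ℕ, ((q : ℂ) * w) ^ (n + 1) / (qfact q (n + 1) : ℂ)
      = w ^ (n + 1) / (qfact q (n + 1) : ℂ) - ((1 - q : ℝ) : ℂ) * w * (w ^ n / (qfact q n : ℂ)) := by
    intro n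
    have hfn : (qfact q n : ℝ) ≠ 0 := (qfact_pos hq0 hq1 n).ne'
    have hnum : (qnum q (n + 1) : ℝ) ≠ 0 := (qnum_pos hq0 hq1 n).ne'
    have hfnC : ((qfact q n : ℝ) : ℂ) ≠ 0 := by exact_mod_cast hfn
    have hnumC : ((qnum q (n + 1) : ℝ) : ℂ) ≠ 0 := by exact_mod_cast hnum
    have hC : ((1:ℂ) - (q:ℂ)) * ((qnum q (n + 1) : ℝ) : ℂ) = 1 - (q:ℂ) ^ (n + 1) := by
      have hr : (1 - q) * qnum q (n + 1) = 1 - q ^ (n + 1) := by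
        rw [qnum, mul_div_cancel₀]
        exact hq2.ne'
      exact_mod_cast hr
    have hqfs : ((qfact q (n + 1) : ℝ) : ℂ)
        = ((qfact q n : ℝ) : ℂ) * ((qnum q (n + 1) : ℝ) : ℂ) := by
      rw [show qfact q (n + 1) = qfact q n * qnum q (n + 1) from rfl]
      push_cast; ring
    rw [hqfs]
    push_cast
    field_simp
    linear_combination w ^ (n + 1) * hC
  have := calc qexC q ((q : ℂ) * w)
      = ((q:ℂ)*w) ^ 0 / (qfact q 0 : ℂ) + ∑' n : ℕ, ((q:ℂ)*w) ^ (n+1) / (qfact q (n+1) : ℂ) :=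
        Summable.tsum_eq_zero_add hg
    _ = 1 + ∑' n : ℕ, (w ^ (n + 1) / (qfact q (n + 1) : ℂ)
          - ((1 - q : ℝ) : ℂ) * w * (w ^ n / (qfact q n : ℂ))) := by
        have h00 : ((q:ℂ)*w) ^ 0 / ((qfact q 0 : ℝ) : ℂ) = 1 := by
          rw [pow_zero, show qfact q 0 = 1 from rfl]; norm_num
        rw [h00, tsum_congr hterm]
    _ = 1 + (∑' n : ℕ, w ^ (n + 1) / (qfact q (n + 1) : ℂ))
          - ((1 - q : ℝ) : ℂ) * w * ∑' n : ℕ, w ^ n / (qfact q n : ℂ) := by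
        rw [Summable.tsum_sub hfs hfm, tsum_mul_left]; ring
    _ = (∑' n : ℕ, w ^ n / (qfact q n : ℂ))
          - ((1 - q : ℝ) : ℂ) * w * ∑' n : ℕ, w ^ n / (qfact q n : ℂ) := by
        have h0 : (∑' n : ℕ, w ^ n / (qfact q n : ℂ))
            = w ^ 0 / (qfact q 0 : ℂ) + ∑' n : ℕ, w ^ (n+1) / (qfact q (n+1) : ℂ) :=
          Summable.tsum_eq_zero_add hf
        have h00 : w ^ 0 / ((qfact q 0 : ℝ) : ℂ) = 1 := by
          rw [pow_zero, show qfact q 0 = 1 from rfl]; norm_num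
        rw [h0, h00]
  rw [this, qexC]
  ring

lemma qexC_ne_zero_small (w : ℂ) (hw : ‖w‖ < 1 / 2) : qexC q w ≠ 0 := by
  have hq2 : 0 < 1 - q := by linarith
  have hR : (1 : ℝ) ≤ 1 / (1 - q) := by
    rw [le_div_iff₀ hq2]; linarith
  have hw1 : ‖w‖ < 1 := by linarith
  have hf : Summable (fun n : ℕ => w ^ n / (qfact q n : ℂ)) :=
    summable_qexC hq0 hq1 w (by linarith)
  have hfs : Summable (fun n : ℕ => w ^ (n + 1) / (qfact q (n + 1) : ℂ)) :=
    (summable_nat_add_iff 1).mpr hf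
  have hgeo : Summable (fun n : ℕ => ‖w‖ ^ (n + 1)) := by
    have := summable_geometric_of_lt_one (norm_nonneg w) hw1
    simpa [pow_succ'] using this.mul_left ‖w‖
  have hbound : ∀ n : ℕ, ‖w ^ (n + 1) / (qfact q (n + 1) : ℂ)‖ ≤ ‖w‖ ^ (n + 1) := by
    intro n
    have h1 : (1 : ℝ) ≤ qfact q (n + 1) := qfact_ge_one hq0 hq1 (n + 1)
    rw [norm_div, norm_pow, Complex.norm_real, Real.norm_eq_abs,
      abs_of_pos (qfact_pos hq0 hq1 (n + 1))]
    exact div_le_self (pow_nonneg (norm_nonneg _) _) h1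
  have hnorms : Summable (fun n : ℕ => ‖w ^ (n + 1) / (qfact q (n + 1) : ℂ)‖) :=
    Summable.of_nonneg_of_le (fun n => norm_nonneg _) hbound hgeo
  have htail : ‖∑' n : ℕ, w ^ (n + 1) / (qfact q (n + 1) : ℂ)‖ < 1 := by
    calc ‖∑' n : ℕ, w ^ (n + 1) / (qfact q (n + 1) : ℂ)‖
        ≤ ∑' n : ℕ, ‖w ^ (n + 1) / (qfact q (n + 1) : ℂ)‖ := norm_tsum_le_tsum_norm hnorms
    _ ≤ ∑' n : ℕ, ‖w‖ ^ (n + 1) := Summable.tsum_le_tsum hbound hnorms hgeo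
    _ = ‖w‖ * (1 - ‖w‖)⁻¹ := by
        rw [show (fun n : ℕ => ‖w‖ ^ (n + 1)) = fun n : ℕ => ‖w‖ * ‖w‖ ^ n from
          funext fun n => by rw [pow_succ']]
        rw [tsum_mul_left, tsum_geometric_of_lt_one (norm_nonneg w) hw1]
    _ < 1 := by
        rw [mul_inv_lt_iff₀ (by linarith)]
        linarith
  have heq : qexC q w = 1 + ∑' n : ℕ, w ^ (n + 1) / (qfact q (n + 1) : ℂ) := by
    have h00 : w ^ 0 / ((qfact q 0 : ℝ) : ℂ) = 1 := by
      rw [pow_zero, show qfact q 0 = 1 from rfl]; norm_num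
    rw [qexC, Summable.tsum_eq_zero_add hf, h00]
  intro h0
  rw [heq] at h0
  have : ‖∑' n : ℕ, w ^ (n + 1) / (qfact q (n + 1) : ℂ)‖ = 1 := by
    have : (∑' n : ℕ, w ^ (n + 1) / (qfact q (n + 1) : ℂ)) = -1 := by linear_combination h0
    rw [this]; simp
  linarith

lemma qexC_ne_zero (w : ℂ) (hw : ‖w‖ < 1 / (1 - q)) : qexC q w ≠ 0 := by
  have key : ∀ N : ℕ, ∀ u : ℂ, ‖u‖ < 1 / (1 - q) →
      qexC q ((q : ℂ) ^ N * u) ≠ 0 → qexC q u ≠ 0 := by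
    intro N
    induction N with
    | zero => intro u hu h; simpa using h
    | succ N ih =>
        intro u hu h
        have hqNu : ‖(q : ℂ) ^ N * u‖ < 1 / (1 - q) := by
          rw [norm_mul, norm_pow, Complex.norm_real, Real.norm_eq_abs, abs_of_pos hq0]
          calc q ^ N * ‖u‖ ≤ 1 * ‖u‖ :=
            mul_le_mul_of_nonneg_right (pow_le_one₀ hq0.le hq1.le) (norm_nonneg _)
          _ = ‖u‖ := one_mul _
          _ < _ := hu
        have heq : (q : ℂ) ^ (N + 1) * u = (q : ℂ) * ((q : ℂ) ^ N * u) := by ring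
        rw [heq, qexC_funeq hq0 hq1 _ hqNu] at h
        exact ih u hu fun hz => h (by rw [hz, mul_zero])
  have hpos : (0:ℝ) < (1/2) / (‖w‖ + 1) :=
    div_pos (by norm_num) (by positivity)
  obtain ⟨N, hN⟩ := exists_pow_lt_of_lt_one hpos hq1
  apply key N w hw
  apply qexC_ne_zero_small hq0 hq1
  rw [norm_mul, norm_pow, Complex.norm_real, Real.norm_eq_abs, abs_of_pos hq0]
  have h1 : q ^ N * (‖w‖ + 1) < 1 / 2 := by
    rw [← lt_div_iff₀ (by positivity)]; exact hN
  have h2 : q ^ N * ‖w‖ ≤ q ^ N * (‖w‖ + 1) := by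
    apply mul_le_mul_of_nonneg_left (by linarith) (by positivity)
  linarith

lemma summable_qexR (x : ℝ) (hx0 : 0 ≤ x) (hx : x < 1 / (1 - q)) :
    Summable (fun n : ℕ => x ^ n / qfact q n) := by
  have hC : Summable (fun n : ℕ => (x : ℂ) ^ n / (qfact q n : ℂ)) := by
    apply summable_qexC hq0 hq1
    rw [Complex.norm_real, Real.norm_eq_abs, abs_of_nonneg hx0]; exact hx
  have : Summable (fun n : ℕ => ((x ^ n / qfact q n : ℝ) : ℂ)) := by
    convert hC using 2 with n; push_cast; ring
  exact_mod_cast this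

lemma qexR_pos (x : ℝ) (hx0 : 0 ≤ x) (hx : x < 1 / (1 - q)) : 0 < qexR q x := by
  have hf := summable_qexR hq0 hq1 x hx0 hx
  have h1 : (1 : ℝ) ≤ qexR q x := by
    have h0 : x ^ 0 / qfact q 0 = 1 := by
      rw [pow_zero, show qfact q 0 = 1 from rfl]; norm_num
    calc (1:ℝ) = x ^ 0 / qfact q 0 := h0.symm
    _ ≤ qexR q x :=
      Summable.le_tsum hf 0 fun n _ => div_nonneg (pow_nonneg hx0 _) (qfact_pos hq0 hq1 n).le
  linarith

end Aux

/-- `e_q(w) ≠ 0` for every `‖w‖ < R`; consequently the overlap of any two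
q-coherent states is nonzero, so no two q-coherent states are orthogonal. -/
theorem coherent_states_never_orthogonal (q : ℝ) (hq0 : 0 < q) (hq1 : q < 1) :
    (∀ w : ℂ, ‖w‖ < 1 / (1 - q) → qexC q w ≠ 0) ∧
    (∀ z z' : ℂ, ‖z‖ ^ 2 < 1 / (1 - q) → ‖z'‖ ^ 2 < 1 / (1 - q) →
      (∑' n : ℕ, (starRingEnd ℂ) (coh q z' n) * coh q z n) ≠ 0) := by
  constructor
  · exact fun w hw => qexC_ne_zero hq0 hq1 w hw
  · intro z z' hz hz'
    set a : ℝ := (Real.sqrt (qexR q (‖z‖ ^ 2)))⁻¹ with ha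
    set a' : ℝ := (Real.sqrt (qexR q (‖z'‖ ^ 2)))⁻¹ with ha'
    have hapos : 0 < a := by
      rw [ha]
      exact inv_pos.mpr (Real.sqrt_pos.mpr
        (qexR_pos hq0 hq1 _ (by positivity) hz))
    have ha'pos : 0 < a' := by
      rw [ha']
      exact inv_pos.mpr (Real.sqrt_pos.mpr
        (qexR_pos hq0 hq1 _ (by positivity) hz'))
    have hterm : ∀ n : ℕ, (starRingEnd ℂ) (coh q z' n) * coh q z n
        = ((a' * a : ℝ) : ℂ) * (((starRingEnd ℂ) z' * z) ^ n / (qfact q n : ℂ)) := by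
      intro n
      have hfpos := qfact_pos hq0 hq1 n
      have hsq : ((Real.sqrt (qfact q n) : ℝ) : ℂ) * ((Real.sqrt (qfact q n) : ℝ) : ℂ)
          = ((qfact q n : ℝ) : ℂ) := by
        rw [← Complex.ofReal_mul, Real.mul_self_sqrt hfpos.le]
      have hsne : ((Real.sqrt (qfact q n) : ℝ) : ℂ) ≠ 0 := by
        simp only [ne_eq, Complex.ofReal_eq_zero]
        exact (Real.sqrt_pos.mpr hfpos).ne'
      rw [coh, coh]
      simp only [map_div₀, map_mul, map_pow, Complex.conj_ofReal]
      rw [← ha, ← ha']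
      push_cast
      rw [mul_pow, ← hsq]
      ring
    rw [tsum_congr hterm, tsum_mul_left]
    have hnorm : ‖(starRingEnd ℂ) z' * z‖ < 1 / (1 - q) := by
      rw [norm_mul, RCLike.norm_conj]
      nlinarith [norm_nonneg z, norm_nonneg z']
    exact mul_ne_zero (by exact_mod_cast (mul_pos ha'pos hapos).ne')
      (qexC_ne_zero hq0 hq1 _ hnorm)
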